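/- If E is a free face of a simplicial complex Γ with dim E ≤ d−1, then there is a free sequence E_1,…,E_r of faces of dimension ≤ d−1 of the d-closure Σ = Δ_d(Γ) such that collapsing Σ along this sequence yields Σ∖E (all faces of Σ containing E removed). -/

import Mathlib

namespace ChordalPaper

/-- A simplicial complex on vertex set `Fin n`: a family of finsets closed under subsets. -/
def IsComplex {n : ℕ} (Γ : Set (Finset (Fin n))) : Prop :=
  ∀ F ∈ Γ, ∀ F' ⊆ F, F' ∈ Γ

/-- The `d`-closure `Δ_d(Γ)`: all subsets of size `≤ d`, together with all subsets
all of whose `(d+1)`-element subsets are faces of `Γ`. -/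
def dClosure {n : ℕ} (d : ℕ) (Γ : Set (Finset (Fin n))) : Set (Finset (Fin n)) :=
  {F | F.card ≤ d ∨ ∀ G ⊆ F, G.card = d + 1 → G ∈ Γ}

/-- The pure `(d-1)`-skeleton `⟨[n]⟩^{[d-1]}` of the full simplex: all subsets of size `≤ d`. -/
def fullSkel (n d : ℕ) : Set (Finset (Fin n)) := {F | F.card ≤ d}

/-- A facet: a maximal face. -/
def IsFacet {n : ℕ} (Γ : Set (Finset (Fin n))) (F : Finset (Fin n)) : Prop :=
  F ∈ Γ ∧ ∀ G ∈ Γ, F ⊆ G → G = F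

/-- A free face: a face contained in a unique facet. -/
def IsFreeFace {n : ℕ} (Γ : Set (Finset (Fin n))) (E : Finset (Fin n)) : Prop :=
  E ∈ Γ ∧ ∃! F, IsFacet Γ F ∧ E ⊆ F

/-- Collapse at `E`: remove all faces containing `E` (including `E` itself). -/
def collapseFace {n : ℕ} (Γ : Set (Finset (Fin n))) (E : Finset (Fin n)) :
    Set (Finset (Fin n)) := {F ∈ Γ | ¬ E ⊆ F}

/-- Successive collapses along a list of faces. -/
def collapseList {n : ℕ} (Γ : Set (Finset (Fin n))) :
    List (Finset (Fin n)) → Set (Finset (Fin n))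
  | [] => Γ
  | E :: L => collapseList (collapseFace Γ E) L

/-- A free sequence: each face is free in the complex obtained by collapsing the previous ones. -/
def IsFreeSeq {n : ℕ} (Γ : Set (Finset (Fin n))) : List (Finset (Fin n)) → Prop
  | [] => True
  | E :: L => IsFreeFace Γ E ∧ IsFreeSeq (collapseFace Γ E) L

/-- `d`-collapsibility: a sequence of elementary `d`-collapsings (at free faces of
dimension `< d`, i.e. cardinality `≤ d`) reduces `Γ` to the void complex. -/
def Collapsible {n : ℕ} (d : ℕ) (Γ : Set (Finset (Fin n))) : Prop :=
  ∃ L : List (Finset (Fin n)),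
    IsFreeSeq Γ L ∧ (∀ E ∈ L, E.card ≤ d) ∧ collapseList Γ L = ∅

/-- Simplicial deletion `Γ∖E`: remove all faces strictly containing `E` (keeping `E`). -/
def srDel {n : ℕ} (Γ : Set (Finset (Fin n))) (E : Finset (Fin n)) :
    Set (Finset (Fin n)) := {F ∈ Γ | ¬ E ⊂ F}

/-- Successive simplicial deletions along a list of faces. -/
def srDelList {n : ℕ} (Γ : Set (Finset (Fin n))) :
    List (Finset (Fin n)) → Set (Finset (Fin n))
  | [] => Γ
  | E :: L => srDelList (srDel Γ E) L

/-- A simplicial order for a `d`-closure on `Fin n`: a sequence of non-facet free faces of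
cardinality `d` whose successive simplicial deletions reduce the complex to the pure
`(d-1)`-skeleton of the full simplex. -/
def IsSimpOrder {n : ℕ} (d : ℕ) (Γ : Set (Finset (Fin n))) :
    List (Finset (Fin n)) → Prop
  | [] => Γ = fullSkel n d
  | E :: L => E.card = d ∧ IsFreeFace Γ E ∧ ¬ IsFacet Γ E ∧ IsSimpOrder d (srDel Γ E) L

/-- `Γ` is `d`-chordal: its `d`-closure equals the pure `(d-1)`-skeleton of the full
simplex or admits a simplicial order. -/
def DChordal {n : ℕ} (d : ℕ) (Γ : Set (Finset (Fin n))) : Prop :=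
  ∃ L, IsSimpOrder d (dClosure d Γ) L

/-- A minimal nonface of `Γ`. -/
def IsMinNonface {n : ℕ} (Γ : Set (Finset (Fin n))) (F : Finset (Fin n)) : Prop :=
  F ∉ Γ ∧ ∀ G ⊂ F, G ∈ Γ

end ChordalPaper


open ChordalPaper

lemma collapseList_append' {n : ℕ} (L1 L2 : List (Finset (Fin n))) :
    ∀ Γ : Set (Finset (Fin n)),
      collapseList Γ (L1 ++ L2) = collapseList (collapseList Γ L1) L2 := by
  induction L1 with
  | nil => intro Γ; rfl
  | cons E L ih => intro Γ; exact ih (collapseFace Γ E)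

lemma isFreeSeq_append' {n : ℕ} (L1 L2 : List (Finset (Fin n))) :
    ∀ Γ : Set (Finset (Fin n)), IsFreeSeq Γ L1 → IsFreeSeq (collapseList Γ L1) L2 →
      IsFreeSeq Γ (L1 ++ L2) := by
  induction L1 with
  | nil => intro Γ _ h; exact h
  | cons E L ih =>
      rintro Γ ⟨h1, h2⟩ h3
      exact ⟨h1, ih (collapseFace Γ E) h2 h3⟩

/-- Collapsing an "upward-closed within C" finite family `S` of faces, each of whose proper
supersets in `C` lie in `S` with strictly larger cardinality, by a free sequence. -/
lemma collapse_upward {n : ℕ} : ∀ (k : ℕ) (S : Finset (Finset (Fin n))) (_ : S.card = k)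
    (C : Set (Finset (Fin n)))
    (_ : ∀ G ∈ S, G ∈ C ∧ ∀ H ∈ C, G ⊆ H → H ≠ G → H ∈ S ∧ G.card < H.card),
    ∃ L : List (Finset (Fin n)), IsFreeSeq C L ∧ (∀ G ∈ L, G ∈ S) ∧
      collapseList C L = {F ∈ C | F ∉ S} := by
  intro k
  induction k with
  | zero =>
      intro S hS0 C _
      have hSe : S = ∅ := Finset.card_eq_zero.mp hS0
      subst hSe
      refine ⟨[], trivial, by simp, ?_⟩
      show C = _
      ext F; simp
  | succ k ih =>
      intro S hcard C hS
      have hne : S.Nonempty := Finset.card_pos.mp (by omega)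
      obtain ⟨G, hGS, hGmax⟩ := S.exists_max_image Finset.card hne
      obtain ⟨hGC, hGsup⟩ := hS G hGS
      have honly : ∀ H ∈ C, G ⊆ H → H = G := by
        intro H hH hGH
        by_contra hne'
        obtain ⟨hHS, hlt⟩ := hGsup H hH hGH hne'
        have := hGmax H hHS
        omega
      have hfree : IsFreeFace C G := by
        refine ⟨hGC, G, ⟨⟨hGC, fun H hH hGH => honly H hH hGH⟩, subset_rfl⟩, ?_⟩
        rintro F ⟨⟨hFC, _⟩, hGF⟩
        exact honly F hFC hGF
      have hcoll : collapseFace C G = {F ∈ C | F ≠ G} := by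
        ext F
        constructor
        · rintro ⟨h1, h2⟩; exact ⟨h1, fun he => h2 (he ▸ subset_rfl)⟩
        · rintro ⟨h1, h2⟩; exact ⟨h1, fun hGF => h2 (honly F h1 hGF)⟩
      have hcard' : (S.erase G).card = k := by
        rw [Finset.card_erase_of_mem hGS, hcard]; omega
      have hS' : ∀ G' ∈ S.erase G, G' ∈ {F ∈ C | F ≠ G} ∧
          ∀ H ∈ {F ∈ C | F ≠ G}, G' ⊆ H → H ≠ G' → H ∈ S.erase G ∧ G'.card < H.card := by
        intro G' hG'
        obtain ⟨hne', hG'S⟩ := Finset.mem_erase.mp hG'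
        obtain ⟨h1, h2⟩ := hS G' hG'S
        refine ⟨⟨h1, hne'⟩, ?_⟩
        rintro H ⟨hHC, hHG⟩ hsub hneH
        obtain ⟨hHS, hlt⟩ := h2 H hHC hsub hneH
        exact ⟨Finset.mem_erase.mpr ⟨hHG, hHS⟩, hlt⟩
      obtain ⟨L'', hfs, hmem, hcl⟩ := ih (S.erase G) hcard' {F ∈ C | F ≠ G} hS'
      refine ⟨G :: L'', ⟨hfree, by rw [hcoll]; exact hfs⟩, ?_, ?_⟩
      · intro G' hG'
        rcases List.mem_cons.mp hG' with h | h
        · exact h ▸ hGS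
        · exact Finset.mem_of_mem_erase (hmem G' h)
      · show collapseList (collapseFace C G) L'' = _
        rw [hcoll, hcl]
        ext F
        constructor
        · rintro ⟨⟨h1, h2⟩, h3⟩
          refine ⟨h1, fun hFS => h3 (Finset.mem_erase.mpr ⟨h2, hFS⟩)⟩
        · rintro ⟨h1, h2⟩
          have hFG : F ≠ G := fun he => h2 (he ▸ hGS)
          exact ⟨⟨h1, hFG⟩, fun hFe => h2 (Finset.mem_of_mem_erase hFe)⟩

open ChordalPaper in
/-- a free face `E` of `Γ` of dimension `≤ d-1` gives rise to a free
sequence of the `d`-closure, of faces of dimension `≤ d-1`, collapsing it to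
`Δ_d(Γ) ∖ E`. -/
theorem stmt7 (n d : ℕ) (hd : 1 ≤ d) (Γ : Set (Finset (Fin n))) (hΓ : IsComplex Γ)
    (E : Finset (Fin n)) (hE : IsFreeFace Γ E) (hcard : E.card ≤ d) :
    ∃ L : List (Finset (Fin n)), IsFreeSeq (dClosure d Γ) L ∧ (∀ E' ∈ L, E'.card ≤ d) ∧
      collapseList (dClosure d Γ) L = {F ∈ dClosure d Γ | ¬ E ⊆ F} := by
  classical
  obtain ⟨hEΓ, F₀, ⟨hF₀fac, hEF₀⟩, huniq⟩ := hE
  -- every face of Γ containing E lies in F₀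
  have hsub : ∀ T ∈ Γ, E ⊆ T → T ⊆ F₀ := by
    intro T hT hET
    have hfin : {G : Finset (Fin n) | G ∈ Γ ∧ T ⊆ G}.Finite := Set.toFinite _
    have hne : {G : Finset (Fin n) | G ∈ Γ ∧ T ⊆ G}.Nonempty := ⟨T, hT, subset_rfl⟩
    obtain ⟨m, ⟨hmΓ, hTm⟩, hmax⟩ := hfin.exists_maximalFor Finset.card _ hne
    have hmfac : IsFacet Γ m := by
      refine ⟨hmΓ, fun Gg hGg hmG => ?_⟩
      have := hmax (j := Gg) ⟨hGg, hTm.trans hmG⟩ (Finset.card_le_card hmG)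
      exact (Finset.eq_of_subset_of_card_le hmG this).symm
    have hm : m = F₀ := huniq m ⟨hmfac, hET.trans hTm⟩
    exact hm ▸ hTm
  -- key claim: big faces of the d-closure containing E lie in F₀
  have hKC : ∀ H ∈ dClosure d Γ, E ⊆ H → d + 1 ≤ H.card → H ⊆ F₀ := by
    intro H hH hEH hHd
    have hHmem : ∀ G ⊆ H, G.card = d + 1 → G ∈ Γ := by
      rcases hH with h | h
      · omega
      · exact h
    intro v hv
    have hEv : insert v E ⊆ H := Finset.insert_subset hv hEH
    have hcard1 : (insert v E).card ≤ d + 1 :=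
      le_trans (Finset.card_insert_le _ _) (by omega)
    obtain ⟨T, hT1, hT2, hT3⟩ := Finset.exists_subsuperset_card_eq hEv hcard1 hHd
    have hTF := hsub T (hHmem T hT2 hT3) ((Finset.subset_insert _ _).trans hT1)
    exact hTF (hT1 (Finset.mem_insert_self v E))
  -- the family to be collapsed first
  set S : Finset (Finset (Fin n)) :=
    Finset.univ.filter (fun G => E ⊆ G ∧ G.card ≤ d ∧ ¬ G ⊆ F₀) with hSdef
  have hSmem : ∀ G, G ∈ S ↔ E ⊆ G ∧ G.card ≤ d ∧ ¬ G ⊆ F₀ := by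
    intro G; simp [hSdef]
  have hS : ∀ G ∈ S, G ∈ dClosure d Γ ∧ ∀ H ∈ dClosure d Γ, G ⊆ H → H ≠ G →
      H ∈ S ∧ G.card < H.card := by
    intro G hG
    obtain ⟨hEG, hGd, hGF⟩ := (hSmem G).mp hG
    refine ⟨Or.inl hGd, ?_⟩
    intro H hH hGH hne
    have hssub : G ⊂ H := ssubset_of_subset_of_ne hGH (fun h => hne h.symm)
    have hlt : G.card < H.card := Finset.card_lt_card hssub
    have hHF : ¬ H ⊆ F₀ := fun h => hGF (hGH.trans h)
    by_cases hc : H.card ≤ d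
    · exact ⟨(hSmem H).mpr ⟨(hEG.trans hGH), hc, hHF⟩, hlt⟩
    · exact absurd (hKC H hH (hEG.trans hGH) (by omega)) hHF
  obtain ⟨L₁, hfs₁, hmem₁, hcl₁⟩ := collapse_upward S.card S rfl (dClosure d Γ) hS
  -- after collapsing S, E is free with unique facet F₀
  have hED : E ∈ dClosure d Γ := Or.inl hcard
  have hF0D : F₀ ∈ dClosure d Γ := Or.inr (fun G hG _ => hΓ F₀ hF₀fac.1 G hG)
  have hES : E ∉ S := fun h => ((hSmem E).mp h).2.2 hEF₀
  have hF₀S : F₀ ∉ S := fun h => ((hSmem F₀).mp h).2.2 subset_rfl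
  have hmax' : ∀ H, H ∈ dClosure d Γ → H ∉ S → E ⊆ H → H ⊆ F₀ := by
    intro H hH hHS hEH
    by_cases hc : H.card ≤ d
    · by_contra hnF
      exact hHS ((hSmem H).mpr ⟨hEH, hc, hnF⟩)
    · exact hKC H hH hEH (by omega)
  have hfreeE : IsFreeFace {F ∈ dClosure d Γ | F ∉ S} E := by
    have hF₀fac' : IsFacet {F ∈ dClosure d Γ | F ∉ S} F₀ := by
      refine ⟨⟨hF0D, hF₀S⟩, ?_⟩
      rintro H ⟨hHD, hHS⟩ hFH
      exact subset_antisymm (hmax' H hHD hHS (hEF₀.trans hFH)) hFH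
    refine ⟨⟨hED, hES⟩, F₀, ⟨hF₀fac', hEF₀⟩, ?_⟩
    rintro F' ⟨⟨⟨hFpD, hF'S⟩, hF'max⟩, hEF'⟩
    exact (hF'max F₀ ⟨hF0D, hF₀S⟩ (hmax' F' hFpD hF'S hEF')).symm
  refine ⟨L₁ ++ [E], ?_, ?_, ?_⟩
  · refine isFreeSeq_append' L₁ [E] _ hfs₁ ?_
    rw [hcl₁]
    exact ⟨hfreeE, trivial⟩
  · intro E' hE'
    rcases List.mem_append.mp hE' with h | h
    · exact ((hSmem E').mp (hmem₁ E' h)).2.1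
    · rw [List.mem_singleton.mp h]; exact hcard
  · rw [collapseList_append' L₁ [E], hcl₁]
    show collapseFace _ E = _
    ext F
    constructor
    · rintro ⟨⟨h1, _⟩, h3⟩; exact ⟨h1, h3⟩
    · rintro ⟨h1, h2⟩
      exact ⟨⟨h1, fun hFS => h2 ((hSmem F).mp hFS).1⟩, h2⟩
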